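/- Fix a prime p and D ∈ ℕ_{>0}. Let u₁, u₂, u₃ ∈ (0,1) be real numbers with u₁ + u₂ + u₃ = 2, having non-terminating base p expansions uᵢ = Σ_{s≥1} dᵢ,ₛ p^{-s}. Suppose e ≥ 1 is minimal with d₁,ₑ + d₂,ₑ + d₃,ₑ ≠ 2p - 2 (and such e exists). Then d₁,ₑ + d₂,ₑ + d₃,ₑ equals either 2p - 1 or 2p - 3. -/

import Mathlib

/-- Digit lemma for the Sierpiński staircase: if `u₁,u₂,u₃ ∈ (0,1)` sum to `2`, with
non-terminating base-`p` expansions `uᵢ = Σ_{s≥0} dᵢ(s)/p^(s+1)`, and `e` is minimal with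
digit sum at position `e` different from `2p−2`, then that digit sum is `2p−1` or `2p−3`. -/
theorem stmt11 (p : ℕ) (hp : p.Prime) (u : Fin 3 → ℝ) (d : Fin 3 → ℕ → ℕ)
    (hu : ∀ i, u i ∈ Set.Ioo (0 : ℝ) 1)
    (hsum : u 0 + u 1 + u 2 = 2)
    (hdig : ∀ i s, d i s < p)
    (hexp : ∀ i, u i = ∑' s : ℕ, (d i s : ℝ) / p ^ (s + 1))
    (hnt : ∀ i N, ∃ s, N ≤ s ∧ d i s ≠ 0)
    (e : ℕ)
    (hmin : ∀ s < e, d 0 s + d 1 s + d 2 s = 2 * p - 2)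
    (he : d 0 e + d 1 e + d 2 e ≠ 2 * p - 2) :
    d 0 e + d 1 e + d 2 e = 2 * p - 1 ∨ d 0 e + d 1 e + d 2 e = 2 * p - 3 := by
  have hp2 : 2 ≤ p := hp.two_le
  have hp0 : (0 : ℝ) < p := by exact_mod_cast hp.pos
  have hp1 : (1 : ℝ) < p := by exact_mod_cast hp.one_lt
  set f : ℕ → ℝ := fun s => ((d 0 s + d 1 s + d 2 s : ℕ) : ℝ) / p ^ (s + 1) with hfdef
  -- summability of each digit series
  have hgeo : Summable (fun s : ℕ => (1 / (p : ℝ)) ^ s) :=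
    summable_geometric_of_lt_one (by positivity) (by rw [div_lt_one hp0]; exact hp1)
  have hgs : ∀ i : Fin 3, Summable (fun s => (d i s : ℝ) / p ^ (s + 1)) := by
    intro i
    refine Summable.of_nonneg_of_le (fun s => by positivity) (fun s => ?_) hgeo
    have hd : (d i s : ℝ) ≤ p := le_of_lt (by exact_mod_cast hdig i s)
    calc (d i s : ℝ) / p ^ (s + 1) ≤ (p : ℝ) / p ^ (s + 1) := by gcongr
      _ = (1 / (p : ℝ)) ^ s := by
          rw [div_pow, one_pow, pow_succ]
          field_simp
  have hF : Summable f := by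
    apply Summable.congr (((hgs 0).add (hgs 1)).add (hgs 2))
    intro s
    simp only [hfdef]
    push_cast
    ring
  have hFval : ∑' s, f s = 2 := by
    have : ∑' s, f s = (∑' s, (d 0 s : ℝ) / p ^ (s + 1)) +
        (∑' s, (d 1 s : ℝ) / p ^ (s + 1)) + (∑' s, (d 2 s : ℝ) / p ^ (s + 1)) := by
      rw [← Summable.tsum_add (hgs 0) (hgs 1), ← Summable.tsum_add ((hgs 0).add (hgs 1)) (hgs 2)]
      apply tsum_congr
      intro s
      simp only [hfdef]
      push_cast
      ring
    rw [this, ← hexp 0, ← hexp 1, ← hexp 2, hsum]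
  have hFn : ∀ n, Summable (fun i => f (i + n)) := fun n => (summable_nat_add_iff n).2 hF
  have hfnonneg : ∀ s, 0 ≤ f s := fun s => by
    simp only [hfdef]; positivity
  -- value of a single digit at s < e
  have hfval : ∀ s < e, f s = (2 * (p : ℝ) - 2) / p ^ (s + 1) := by
    intro s hs
    simp only [hfdef, hmin s hs]
    congr 1
    push_cast [Nat.cast_sub (by omega : 2 ≤ 2 * p)]
    ring
  -- step identity for tails
  have hstep : ∀ n, ∑' i, f (i + n) = f n + ∑' i, f (i + (n + 1)) := by
    intro n
    rw [Summable.tsum_eq_zero_add (hFn n)]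
    simp only [zero_add]
    congr 1
    apply tsum_congr
    intro i
    congr 1
    omega
  -- tail value
  have tail : ∀ n ≤ e, ∑' i, f (i + n) = 2 / p ^ n := by
    intro n
    induction n with
    | zero => intro _; simpa using hFval
    | succ m ih =>
        intro hm
        have h1 := hstep m
        rw [ih (by omega), hfval m (by omega)] at h1
        have hpm : (0 : ℝ) < (p : ℝ) ^ m := by positivity
        have : ∑' i, f (i + (m + 1)) = 2 / p ^ m - (2 * (p : ℝ) - 2) / p ^ (m + 1) := by
          linarith
        rw [this, pow_succ]
        field_simp
        ring
  -- tail strictly after e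
  set T : ℝ := ∑' i, f (i + (e + 1)) with hTdef
  have hkey : f e + T = 2 / p ^ e := by
    rw [← hstep e, tail e le_rfl]
  -- T > 0
  have hTpos : 0 < T := by
    obtain ⟨s, hs, hds⟩ := hnt 0 (e + 1)
    have : 0 < f (s - (e + 1) + (e + 1)) := by
      have hse : s - (e + 1) + (e + 1) = s := by omega
      rw [hse]
      simp only [hfdef]
      have : (0 : ℝ) < ((d 0 s + d 1 s + d 2 s : ℕ) : ℝ) := by
        have : 1 ≤ d 0 s + d 1 s + d 2 s := by omega
        exact_mod_cast Nat.lt_of_lt_of_le Nat.zero_lt_one this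
      positivity
    exact Summable.tsum_pos (hFn (e + 1)) (fun i => hfnonneg _) _ this
  -- T ≤ 3 / p^(e+1)
  have hTle : T ≤ 3 / p ^ (e + 1) := by
    have hb : ∀ i : ℕ, f (i + (e + 1)) ≤
        (3 * ((p : ℝ) - 1) / p ^ (e + 2)) * (1 / (p : ℝ)) ^ i := by
      intro i
      have hd : ((d 0 (i + (e + 1)) + d 1 (i + (e + 1)) + d 2 (i + (e + 1)) : ℕ) : ℝ)
          ≤ 3 * ((p : ℝ) - 1) := by
        have h0 := hdig 0 (i + (e + 1)); have h1 := hdig 1 (i + (e + 1))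
        have h2 := hdig 2 (i + (e + 1))
        have : (d 0 (i + (e + 1)) + d 1 (i + (e + 1)) + d 2 (i + (e + 1)) : ℕ)
            ≤ 3 * (p - 1) := by omega
        calc ((d 0 (i + (e + 1)) + d 1 (i + (e + 1)) + d 2 (i + (e + 1)) : ℕ) : ℝ)
            ≤ ((3 * (p - 1) : ℕ) : ℝ) := by exact_mod_cast this
          _ = 3 * ((p : ℝ) - 1) := by
              push_cast [Nat.cast_sub (by omega : 1 ≤ p)]; ring
      have hpe : (0 : ℝ) < (p : ℝ) ^ (i + (e + 1) + 1) := by positivity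
      calc f (i + (e + 1)) ≤ 3 * ((p : ℝ) - 1) / p ^ (i + (e + 1) + 1) := by
            simp only [hfdef]
            gcongr
          _ = (3 * ((p : ℝ) - 1) / p ^ (e + 2)) * (1 / (p : ℝ)) ^ i := by
            rw [div_pow, one_pow]
            rw [div_mul_div_comm, mul_one]
            congr 1
            rw [← pow_add]
            congr 1
            omega
    have hsg : Summable (fun i : ℕ => (3 * ((p : ℝ) - 1) / p ^ (e + 2)) * (1 / (p : ℝ)) ^ i) :=
      hgeo.mul_left _
    have := Summable.tsum_le_tsum hb (hFn (e + 1)) hsg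
    rw [tsum_mul_left, tsum_geometric_of_lt_one (by positivity) (by
        rw [div_lt_one hp0]; exact hp1)] at this
    refine le_trans this (le_of_eq ?_)
    have hpm1 : (p : ℝ) - 1 ≠ 0 := by
      intro h
      have : (p : ℝ) = 1 := by linarith
      linarith
    rw [show (p : ℝ) ^ (e + 2) = p ^ (e + 1) * p by rw [pow_succ]]
    field_simp
  -- now translate to the digit sum at e
  set S : ℕ := d 0 e + d 1 e + d 2 e with hSdef
  have hpe1 : (0 : ℝ) < (p : ℝ) ^ (e + 1) := by positivity
  have hfe : f e = (S : ℝ) / p ^ (e + 1) := rfl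
  have hSval : (S : ℝ) = 2 * p - T * p ^ (e + 1) := by
    have h2 : 2 / (p : ℝ) ^ e * p ^ (e + 1) = 2 * p := by
      rw [pow_succ]
      field_simp
    have := hkey
    rw [hfe] at this
    have h3 : (S : ℝ) / p ^ (e + 1) * p ^ (e + 1) = (S : ℝ) := by field_simp
    nlinarith [this]
  have hub : (S : ℝ) < 2 * p := by
    rw [hSval]
    nlinarith [mul_pos hTpos hpe1]
  have hlb : (2 * (p : ℝ)) ≤ (S : ℝ) + 3 := by
    rw [hSval]
    have : T * p ^ (e + 1) ≤ 3 := by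
      have := mul_le_mul_of_nonneg_right hTle (le_of_lt hpe1)
      rwa [div_mul_cancel₀] at this
      positivity
    linarith
  have hubn : S < 2 * p := by exact_mod_cast hub
  have hlbn : 2 * p ≤ S + 3 := by exact_mod_cast hlb
  omega
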